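/- arXiv:2406.17288 — 2 statements merged into one kernel-verified Lean document; each statement's English description precedes it below -/
import Mathlib

section
/- For 0 < q < 1 and any m ≤ m', the subspace V_{m'} is a two-sided ideal of the subalgebra V_m of A(SU_q(2)); in particular each V_m (m ≥ 1) is a two-sided *-ideal of A(SU_q(2)). -/
noncomputable section

namespace QAlg

/-- Generators of a free *-algebra: `inl i` is the generator `z i`, and
`inr i` is its formal adjoint `(z i)*`. -/
abbrev Gen (X : Type) := X ⊕ X

/-- The free algebra on the doubled generating set, realized as the monoid
algebra of the free monoid. -/
abbrev F (X : Type) := MonoidAlgebra ℂ (FreeMonoid (Gen X))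

/-- The *-operation on words: reverse the word and exchange the two copies
of the generators. -/
def wordStar {X : Type} (w : FreeMonoid (Gen X)) : FreeMonoid (Gen X) :=
  FreeMonoid.ofList (((FreeMonoid.toList w).map Sum.swap).reverse)

lemma wordStar_mul {X : Type} (w v : FreeMonoid (Gen X)) :
    wordStar (w * v) = wordStar v * wordStar w := by
  simp [wordStar, FreeMonoid.toList_mul, FreeMonoid.ofList_append]

lemma wordStar_wordStar {X : Type} (w : FreeMonoid (Gen X)) : wordStar (wordStar w) = w := by
  simp [wordStar, List.map_reverse, List.map_map, Sum.swap_swap_eq]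

/-- The canonical conjugate-linear antimultiplicative involution on the free
algebra `F X`, determined by `star (z i) = (z i)*` and complex conjugation
on scalars. -/
def starF {X : Type} (f : F X) : F X :=
  Finsupp.sum f.coeff fun w c => MonoidAlgebra.single (wordStar w) ((starRingEnd ℂ) c)

lemma starF_single {X : Type} (w : FreeMonoid (Gen X)) (c : ℂ) :
    starF (MonoidAlgebra.single w c) = MonoidAlgebra.single (wordStar w) ((starRingEnd ℂ) c) := by
  classical
  rw [starF, MonoidAlgebra.coeff_single]
  refine Finsupp.sum_single_index ?_
  simp

lemma starF_zero {X : Type} : starF (0 : F X) = 0 := by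
  rw [starF, MonoidAlgebra.coeff_zero]; exact Finsupp.sum_zero_index

lemma starF_add {X : Type} (f g : F X) : starF (f + g) = starF f + starF g := by
  classical
  rw [starF, starF, starF, MonoidAlgebra.coeff_add]
  refine Finsupp.sum_add_index' (fun w => by simp) (fun w c₁ c₂ => by
    simp [map_add, MonoidAlgebra.single_add])

lemma starF_single_mul {X : Type} (w : FreeMonoid (Gen X)) (c : ℂ) (g : F X) :
    starF (MonoidAlgebra.single w c * g) = starF g * starF (MonoidAlgebra.single w c) := by
  classical
  induction g using MonoidAlgebra.induction with
  | zero => simp [starF_zero]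
  | single_add v d g _ _ ihg =>
    rw [mul_add, starF_add, starF_add, add_mul, ihg]
    congr 1
    rw [MonoidAlgebra.single_mul_single, starF_single, starF_single, starF_single,
      MonoidAlgebra.single_mul_single, wordStar_mul, map_mul, mul_comm]

lemma starF_mul {X : Type} (f g : F X) : starF (f * g) = starF g * starF f := by
  classical
  induction f using MonoidAlgebra.induction with
  | zero => simp [starF_zero]
  | single_add w c f _ _ ih =>
    rw [add_mul, starF_add, starF_add, ih, mul_add, starF_single_mul]

lemma starF_starF {X : Type} (f : F X) : starF (starF f) = f := by
  classical
  induction f using MonoidAlgebra.induction with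
  | zero => simp [starF_zero]
  | single_add w c f _ _ ih =>
    rw [starF_add, starF_add, ih, starF_single, starF_single, wordStar_wordStar,
      Complex.conj_conj]

/-- The free *-algebra structure on `F X`. -/
def starRingF (X : Type) : StarRing (F X) where
  star := starF
  star_involutive := starF_starF
  star_mul := starF_mul
  star_add := starF_add

/-- The generator `z i` inside the free *-algebra. -/
def zF {X : Type} (i : X) : F X := MonoidAlgebra.of ℂ _ (FreeMonoid.of (Sum.inl i))

/-- The formal adjoint `(z i)*` inside the free *-algebra. -/
def zsF {X : Type} (i : X) : F X := MonoidAlgebra.of ℂ _ (FreeMonoid.of (Sum.inr i))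

/-- The defining relations of quantum `SU(2)` (with `zF 0 = α`, `zF 1 = β`,
`zsF i` playing the role of the adjoint generators), together with their
images under the *-operation. -/
inductive surel (q : ℝ) : F (Fin 2) → F (Fin 2) → Prop
  | r1 : surel q (zF 1 * zF 0) ((q : ℂ) • (zF 0 * zF 1))
  | r2 : surel q (zsF 1 * zF 0) ((q : ℂ) • (zF 0 * zsF 1))
  | r3 : surel q (zF 1 * zsF 1) (zsF 1 * zF 1)
  | r4 : surel q (zF 0 * zsF 0 + zF 1 * zsF 1) 1
  | r5 : surel q (zsF 0 * zF 0 + ((q ^ 2 : ℝ) : ℂ) • (zF 1 * zsF 1)) 1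
  | star_rel {a b} : surel q a b → surel q (starF a) (starF b)

/-- The coordinate *-algebra `A(SU_q(2))`. -/
abbrev SU (q : ℝ) := RingQuot (surel q)

noncomputable instance (q : ℝ) : StarRing (SU q) :=
  @RingQuot.starRing _ _ (starRingF _) (surel q) (fun _ _ h => surel.star_rel h)

/-- The generator `α` of `A(SU_q(2))`. -/
def αg (q : ℝ) : SU q := RingQuot.mkAlgHom ℂ (surel q) (zF 0)

/-- The generator `β` of `A(SU_q(2))`. -/
def βg (q : ℝ) : SU q := RingQuot.mkAlgHom ℂ (surel q) (zF 1)

/-- The elements `e_{j,k,l}` of `A(SU_q(2))`: `α^j β^k (β*)^l` for `j ≥ 0`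
and `β^k (β*)^l (α*)^{-j}` for `j < 0`. -/
def e (q : ℝ) (j : ℤ) (k l : ℕ) : SU q :=
  if 0 ≤ j then αg q ^ j.toNat * βg q ^ k * star (βg q) ^ l
  else βg q ^ k * star (βg q) ^ l * star (αg q) ^ (-j).toNat

/-- The subspace `V_m ⊆ A(SU_q(2))` spanned by the `e_{j,k,l}` with `k + l ≥ m`. -/
def V (q : ℝ) (m : ℕ) : Submodule ℂ (SU q) :=
  Submodule.span ℂ {x | ∃ (j : ℤ) (k l : ℕ), m ≤ k + l ∧ x = e q j k l}

section Test
variable (q : ℝ)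

lemma mk_eq (g : F (Fin 2)) : RingQuot.mkAlgHom ℂ (surel q) g = ⟨Quot.mk _ g⟩ := by
  rw [RingQuot.mkAlgHom_def]
  show RingQuot.mkRingHom (surel q) g = _
  rw [RingQuot.mkRingHom_def]; rfl

lemma star_mk (f : F (Fin 2)) :
    star (RingQuot.mkAlgHom ℂ (surel q) f) = RingQuot.mkAlgHom ℂ (surel q) (starF f) := by
  rw [mk_eq, mk_eq]
  rfl

end Test
lemma wordStar_of {X : Type} (g : Gen X) : wordStar (FreeMonoid.of g) = FreeMonoid.of (Sum.swap g) := by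
  simp only [wordStar, FreeMonoid.toList_of, List.map_cons, List.map_nil, List.reverse_singleton]
  rfl

lemma starF_zF {X : Type} (i : X) : starF (zF i) = zsF i := by
  rw [zF, zsF, MonoidAlgebra.of_apply, MonoidAlgebra.of_apply, starF_single, wordStar_of]
  simp [Sum.swap]
variable (q : ℝ)

lemma star_mk_zF (i : Fin 2) : star (RingQuot.mkAlgHom ℂ (surel q) (zF i)) =
    RingQuot.mkAlgHom ℂ (surel q) (zsF i) := by rw [star_mk, starF_zF]

lemma star_αg : star (αg q) = RingQuot.mkAlgHom ℂ (surel q) (zsF 0) := star_mk_zF q 0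

lemma star_βg : star (βg q) = RingQuot.mkAlgHom ℂ (surel q) (zsF 1) := star_mk_zF q 1

lemma wordStar_one {X : Type} : wordStar (1 : FreeMonoid (Gen X)) = 1 := by
  simp [wordStar]

lemma star_algebraMap' (c : ℂ) :
    star (algebraMap ℂ (SU q) c) = algebraMap ℂ (SU q) ((starRingEnd ℂ) c) := by
  rw [← (RingQuot.mkAlgHom ℂ (surel q)).commutes c,
    ← (RingQuot.mkAlgHom ℂ (surel q)).commutes ((starRingEnd ℂ) c), star_mk]
  congr 1
  rw [show (algebraMap ℂ (F (Fin 2))) c = MonoidAlgebra.single 1 c from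
    congrFun MonoidAlgebra.coe_algebraMap c]
  rw [show (algebraMap ℂ (F (Fin 2))) ((starRingEnd ℂ) c) =
    MonoidAlgebra.single 1 ((starRingEnd ℂ) c) from
    congrFun MonoidAlgebra.coe_algebraMap _]
  rw [starF_single, wordStar_one]

lemma star_smul_SU (c : ℝ) (x : SU q) : star ((c : ℂ) • x) = (c : ℂ) • star x := by
  rw [Algebra.smul_def, Algebra.smul_def, star_mul, star_algebraMap', Complex.conj_ofReal,
    ← Algebra.commutes]

lemma hBA : βg q * αg q = (q : ℂ) • (αg q * βg q) := by
  have := RingQuot.mkAlgHom_rel ℂ (surel.r1 (q := q))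
  rw [map_mul, map_smul, map_mul] at this
  exact this

lemma hBsA : star (βg q) * αg q = (q : ℂ) • (αg q * star (βg q)) := by
  have := RingQuot.mkAlgHom_rel ℂ (surel.r2 (q := q))
  rw [map_mul, map_smul, map_mul] at this
  rw [star_βg]
  exact this

lemma hBBs : βg q * star (βg q) = star (βg q) * βg q := by
  have := RingQuot.mkAlgHom_rel ℂ (surel.r3 (q := q))
  rw [map_mul, map_mul] at this
  rw [star_βg]
  exact this

lemma h4 : αg q * star (αg q) = 1 - βg q * star (βg q) := by
  have := RingQuot.mkAlgHom_rel ℂ (surel.r4 (q := q))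
  rw [map_add, map_mul, map_mul, map_one] at this
  rw [star_αg, star_βg, eq_sub_iff_add_eq]
  exact this

lemma h5 : star (αg q) * αg q = 1 - ((q : ℂ) ^ 2) • (βg q * star (βg q)) := by
  have := RingQuot.mkAlgHom_rel ℂ (surel.r5 (q := q))
  rw [map_add, map_mul, map_smul, map_mul, map_one] at this
  rw [star_αg, star_βg, eq_sub_iff_add_eq,
    show ((q : ℂ) ^ 2) = (((q ^ 2 : ℝ)) : ℂ) by push_cast; ring]
  exact this

lemma hAsBs : star (αg q) * star (βg q) = (q : ℂ) • (star (βg q) * star (αg q)) := by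
  have := congrArg star (hBA q)
  rw [star_mul, star_smul_SU, star_mul] at this
  exact this

lemma hAsB : star (αg q) * βg q = (q : ℂ) • (βg q * star (αg q)) := by
  have := congrArg star (hBsA q)
  rw [star_mul, star_smul_SU, star_mul, star_star] at this
  exact this
section Generic
variable {R : Type} [Ring R] [Algebra ℂ R] {x y : R} {c : ℂ}

lemma mvr (h : y * x = c • (x * y)) (z : R) : y * (x * z) = c • (x * (y * z)) := by
  rw [← mul_assoc, h, smul_mul_assoc, mul_assoc]

lemma comm_pow (h : y * x = c • (x * y)) : ∀ n : ℕ, y * x ^ n = c ^ n • (x ^ n * y)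
  | 0 => by simp
  | n + 1 => by
    rw [pow_succ, ← mul_assoc, comm_pow h n, smul_mul_assoc, mul_assoc, h, mul_smul_comm,
      smul_smul, ← mul_assoc, ← pow_succ, ← pow_succ]

lemma pow_comm_right (h : y * x = c • (x * y)) : ∀ n : ℕ, y ^ n * x = c ^ n • (x * y ^ n)
  | 0 => by simp
  | n + 1 => by
    rw [pow_succ, mul_assoc, h, mul_smul_comm, ← mul_assoc, pow_comm_right h n, smul_mul_assoc,
      smul_smul, mul_assoc, ← pow_succ, ← pow_succ']

lemma absorb (x z : R) (k : ℕ) : x ^ k * (x * z) = x ^ (k + 1) * z := by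
  rw [← mul_assoc, ← pow_succ]

end Generic

section Movers
variable (q : ℝ)

lemma mvBA (n : ℕ) (z : SU q) :
    βg q * (αg q ^ n * z) = ((q:ℂ) ^ n) • (αg q ^ n * (βg q * z)) :=
  mvr (comm_pow (hBA q) n) z

lemma mvBsA (n : ℕ) (z : SU q) :
    star (βg q) * (αg q ^ n * z) = ((q:ℂ) ^ n) • (αg q ^ n * (star (βg q) * z)) :=
  mvr (comm_pow (hBsA q) n) z

lemma mvAsB (k : ℕ) (z : SU q) :
    star (αg q) * (βg q ^ k * z) = ((q:ℂ) ^ k) • (βg q ^ k * (star (αg q) * z)) :=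
  mvr (comm_pow (hAsB q) k) z

lemma mvAsBs (l : ℕ) (z : SU q) :
    star (αg q) * (star (βg q) ^ l * z) = ((q:ℂ) ^ l) • (star (βg q) ^ l * (star (αg q) * z)) :=
  mvr (comm_pow (hAsBs q) l) z

lemma mvBsB (k : ℕ) (z : SU q) :
    star (βg q) * (βg q ^ k * z) = βg q ^ k * (star (βg q) * z) := by
  have h : star (βg q) * βg q = (1:ℂ) • (βg q * star (βg q)) := by rw [one_smul, hBBs]
  simpa using mvr (comm_pow h k) z

lemma mvBslB (l : ℕ) (z : SU q) :
    star (βg q) ^ l * (βg q * z) = βg q * (star (βg q) ^ l * z) := by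
  have h : star (βg q) * βg q = (1:ℂ) • (βg q * star (βg q)) := by rw [one_smul, hBBs]
  simpa using mvr (pow_comm_right h l) z

lemma mvABk (hq : (q:ℂ) ≠ 0) (k : ℕ) (z : SU q) :
    αg q * (βg q ^ k * z) = ((q:ℂ) ^ k)⁻¹ • (βg q ^ k * (αg q * z)) := by
  rw [mvr (pow_comm_right (hBA q) k) z, inv_smul_smul₀ (pow_ne_zero _ hq)]

lemma mvABsl (hq : (q:ℂ) ≠ 0) (l : ℕ) (z : SU q) :
    αg q * (star (βg q) ^ l * z) = ((q:ℂ) ^ l)⁻¹ • (star (βg q) ^ l * (αg q * z)) := by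
  rw [mvr (pow_comm_right (hBsA q) l) z, inv_smul_smul₀ (pow_ne_zero _ hq)]

lemma mvAAs (n : ℕ) :
    αg q * star (αg q) ^ (n + 1) = star (αg q) ^ n - βg q * (star (βg q) * star (αg q) ^ n) := by
  rw [pow_succ', ← mul_assoc, h4, sub_mul, one_mul, mul_assoc]

end Movers

lemma absorb2 {R : Type} [Ring R] (x z : R) (k : ℕ) : x * (x ^ k * z) = x ^ (k + 1) * z := by
  rw [← mul_assoc, ← pow_succ']

section Plain
variable (q : ℝ)

lemma pAsB (k : ℕ) : star (αg q) * βg q ^ k = ((q:ℂ) ^ k) • (βg q ^ k * star (αg q)) :=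
  comm_pow (hAsB q) k

lemma pAsBs (l : ℕ) : star (αg q) * star (βg q) ^ l =
    ((q:ℂ) ^ l) • (star (βg q) ^ l * star (αg q)) :=
  comm_pow (hAsBs q) l

lemma pBsB (k : ℕ) : star (βg q) * βg q ^ k = βg q ^ k * star (βg q) := by
  have h : star (βg q) * βg q = (1:ℂ) • (βg q * star (βg q)) := by rw [one_smul, hBBs]
  simpa using comm_pow h k

end Plain
section Elems
variable (q : ℝ)

def eP (n k l : ℕ) : SU q := αg q ^ n * βg q ^ k * star (βg q) ^ l

def eN (n k l : ℕ) : SU q := βg q ^ k * star (βg q) ^ l * star (αg q) ^ n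

lemma e_coe (n k l : ℕ) : e q (n : ℤ) k l = eP q n k l := by
  simp [e, eP]

lemma e_neg (n k l : ℕ) : e q (-(n : ℤ)) k l = eN q n k l := by
  rcases Nat.eq_zero_or_pos n with rfl | hn
  · simp [e, eN]
  · rw [e, if_neg (by omega), eN]
    simp

lemma star_eP (n k l : ℕ) : star (eP q n k l) = eN q n l k := by
  simp [eP, eN, star_mul, star_pow, star_star, mul_assoc]

lemma star_eN (n k l : ℕ) : star (eN q n k l) = eP q n l k := by
  simp [eP, eN, star_mul, star_pow, star_star, mul_assoc]

variable {m : ℕ}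

lemma eP_mem {k l : ℕ} (n : ℕ) (h : m ≤ k + l) : eP q n k l ∈ V q m := by
  rw [← e_coe]; exact Submodule.subset_span ⟨n, k, l, h, rfl⟩

lemma eN_mem {k l : ℕ} (n : ℕ) (h : m ≤ k + l) : eN q n k l ∈ V q m := by
  rw [← e_neg]; exact Submodule.subset_span ⟨-(n : ℤ), k, l, h, rfl⟩

end Elems

section Identities
variable (q : ℝ)

lemma I1 (n k l : ℕ) : βg q * eP q n k l = ((q:ℂ) ^ n) • eP q n (k+1) l := by
  simp only [eP, mul_assoc, mvBA, absorb2]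

lemma I2 (n k l : ℕ) : βg q * eN q n k l = eN q n (k+1) l := by
  simp only [eN, mul_assoc, absorb2]

lemma I3 (n k l : ℕ) : star (βg q) * eP q n k l = ((q:ℂ) ^ n) • eP q n k (l+1) := by
  simp only [eP, mul_assoc, mvBsA, mvBsB, pBsB, absorb2, ← pow_succ']

lemma I4 (n k l : ℕ) : star (βg q) * eN q n k l = eN q n k (l+1) := by
  simp only [eN, mul_assoc, mvBsB, absorb2]

lemma I5 (n k l : ℕ) : αg q * eP q n k l = eP q (n+1) k l := by
  simp only [eP, mul_assoc, absorb2]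

lemma I6 (k l : ℕ) : αg q * eN q 0 k l = eP q 1 k l := by
  simp only [eN, eP, mul_assoc, pow_zero, mul_one, pow_one]

lemma I8 (n k l : ℕ) : star (αg q) * eN q n k l = ((q:ℂ) ^ (k+l)) • eN q (n+1) k l := by
  simp only [eN, mul_assoc, mvAsB, mvAsBs, mul_smul_comm, smul_smul, absorb2, ← pow_succ',
    pow_add]

lemma I9 (k l : ℕ) : star (αg q) * eP q 0 k l = ((q:ℂ) ^ (k+l)) • eN q 1 k l := by
  simp only [eP, eN, mul_assoc, pow_zero, one_mul, pow_one, mvAsB, mvAsBs, pAsBs, mul_smul_comm,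
    smul_smul, mul_one, pow_add]

lemma I7 (hq : (q:ℂ) ≠ 0) (n k l : ℕ) : αg q * eN q (n+1) k l =
    ((q:ℂ) ^ (k+l))⁻¹ • eN q n k l - ((q:ℂ) ^ (k+l))⁻¹ • eN q n (k+1) (l+1) := by
  simp only [eN, mul_assoc, mvABk q hq, mvABsl q hq, mvAAs, mul_sub, smul_sub, mul_smul_comm,
    smul_smul, mvBslB, absorb, absorb2]
  module

lemma I10 (n k l : ℕ) : star (αg q) * eP q (n+1) k l =
    eP q n k l - ((q:ℂ) ^ (2*n+2)) • eP q n (k+1) (l+1) := by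
  have h5' : star (αg q) * (αg q * (αg q ^ n * (βg q ^ k * star (βg q) ^ l))) =
      (1 - ((q:ℂ)^2) • (βg q * star (βg q))) * (αg q ^ n * (βg q ^ k * star (βg q) ^ l)) := by
    rw [← mul_assoc, h5]
  simp only [eP, mul_assoc, pow_succ']
  rw [h5', sub_mul, one_mul, smul_mul_assoc]
  simp only [mul_assoc, mvBsA, mvBA, mul_smul_comm, smul_smul, mvBsB, absorb2, ← pow_succ']
  module

end Identities
section Members
variable (q : ℝ)

lemma star_smul_SU' (c : ℂ) (x : SU q) :
    star (c • x) = ((starRingEnd ℂ) c) • star x := by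
  rw [Algebra.smul_def, Algebra.smul_def, star_mul, star_algebraMap', ← Algebra.commutes]

lemma star_e (j : ℤ) (k l : ℕ) : star (e q j k l) = e q (-j) l k := by
  rcases j.eq_nat_or_neg with ⟨n, rfl | rfl⟩
  · rw [e_coe, star_eP, ← e_neg]
  · rw [e_neg, star_eN, neg_neg, ← e_coe]

variable {m : ℕ}

lemma starV {x : SU q} (hx : x ∈ V q m) : star x ∈ V q m := by
  induction hx using Submodule.span_induction with
  | mem y hy =>
    obtain ⟨j, k, l, hkl, rfl⟩ := hy
    rw [star_e]
    exact Submodule.subset_span ⟨-j, l, k, by omega, rfl⟩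
  | zero => simpa using (V q m).zero_mem
  | add x y _ _ hx hy => rw [star_add]; exact Submodule.add_mem _ hx hy
  | smul c x _ hx => rw [star_smul_SU']; exact Submodule.smul_mem _ _ hx

lemma gen_mul_e (hq0 : 0 < q) {g : SU q}
    (hg : g = αg q ∨ g = βg q ∨ g = star (αg q) ∨ g = star (βg q))
    (j : ℤ) (k l : ℕ) (h : m ≤ k + l) : g * e q j k l ∈ V q m := by
  have hq : (q : ℂ) ≠ 0 := by
    simpa [Complex.ofReal_ne_zero] using ne_of_gt hq0
  have hkl1 : m ≤ k + 1 + l := by omega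
  have hkl2 : m ≤ k + (l + 1) := by omega
  have hkl3 : m ≤ k + 1 + (l + 1) := by omega
  rcases j.eq_nat_or_neg with ⟨n, rfl | rfl⟩
  · rw [e_coe]
    rcases hg with rfl | rfl | rfl | rfl
    · rw [I5]; exact eP_mem q _ h
    · rw [I1]; exact Submodule.smul_mem _ _ (eP_mem q _ hkl1)
    · cases n with
      | zero => rw [I9]; exact Submodule.smul_mem _ _ (eN_mem q _ h)
      | succ n =>
        rw [I10]
        exact Submodule.sub_mem _ (eP_mem q _ h) (Submodule.smul_mem _ _ (eP_mem q _ hkl3))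
    · rw [I3]; exact Submodule.smul_mem _ _ (eP_mem q _ hkl2)
  · rw [e_neg]
    rcases hg with rfl | rfl | rfl | rfl
    · cases n with
      | zero => rw [I6]; exact eP_mem q _ h
      | succ n =>
        rw [I7 q hq]
        exact Submodule.sub_mem _ (Submodule.smul_mem _ _ (eN_mem q _ h))
          (Submodule.smul_mem _ _ (eN_mem q _ hkl3))
    · rw [I2]; exact eN_mem q _ hkl1
    · rw [I8]; exact Submodule.smul_mem _ _ (eN_mem q _ h)
    · rw [I4]; exact eN_mem q _ hkl2

end Members
section Alg
variable (q : ℝ)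

lemma mk_of_mem (w : FreeMonoid (Gen (Fin 2))) :
    RingQuot.mkAlgHom ℂ (surel q) (MonoidAlgebra.of ℂ (FreeMonoid (Gen (Fin 2))) w) ∈
      Algebra.adjoin ℂ ({αg q, βg q, star (αg q), star (βg q)} : Set (SU q)) := by
  induction w using FreeMonoid.inductionOn' with
  | one => rw [map_one, map_one]; exact Subalgebra.one_mem _
  | of_mul g w ihw =>
    rw [map_mul, map_mul]
    refine Subalgebra.mul_mem _ ?_ ihw
    rcases g with i | i
    · fin_cases i
      · exact Algebra.subset_adjoin (Or.inl rfl)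
      · exact Algebra.subset_adjoin (Or.inr (Or.inl rfl))
    · fin_cases i
      · exact Algebra.subset_adjoin (Or.inr (Or.inr (Or.inl (star_αg q).symm)))
      · exact Algebra.subset_adjoin (Or.inr (Or.inr (Or.inr (star_βg q).symm)))

lemma adjoin_eq_top :
    Algebra.adjoin ℂ ({αg q, βg q, star (αg q), star (βg q)} : Set (SU q)) = ⊤ := by
  rw [eq_top_iff]
  rintro a -
  obtain ⟨f, rfl⟩ := RingQuot.mkAlgHom_surjective ℂ (surel q) a
  induction f using MonoidAlgebra.induction_on with
  | of g => exact mk_of_mem q g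
  | add f g hf hg => rw [map_add]; exact Subalgebra.add_mem _ hf hg
  | smul r f hf => rw [map_smul]; exact Subalgebra.smul_mem _ hf r

/-- Elements whose left multiplication preserves `V q m`. -/
def Sl (m : ℕ) : Subalgebra ℂ (SU q) where
  carrier := {a | ∀ x ∈ V q m, a * x ∈ V q m}
  mul_mem' := by
    intro a b ha hb x hx
    rw [mul_assoc]
    exact ha _ (hb _ hx)
  add_mem' := by
    intro a b ha hb x hx
    rw [add_mul]
    exact Submodule.add_mem _ (ha _ hx) (hb _ hx)
  algebraMap_mem' := by
    intro c x hx
    rw [← Algebra.smul_def]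
    exact Submodule.smul_mem _ _ hx

lemma gen_mulV (hq0 : 0 < q) {g : SU q}
    (hg : g = αg q ∨ g = βg q ∨ g = star (αg q) ∨ g = star (βg q))
    {m : ℕ} {x : SU q} (hx : x ∈ V q m) : g * x ∈ V q m := by
  induction hx using Submodule.span_induction with
  | mem y hy =>
    obtain ⟨j, k, l, hkl, rfl⟩ := hy
    exact gen_mul_e q hq0 hg j k l hkl
  | zero => rw [mul_zero]; exact Submodule.zero_mem _
  | add x y _ _ hx hy => rw [mul_add]; exact Submodule.add_mem _ hx hy
  | smul c x _ hx => rw [mul_smul_comm]; exact Submodule.smul_mem _ _ hx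

lemma mulV_left (hq0 : 0 < q) (a : SU q) {m : ℕ} {x : SU q} (hx : x ∈ V q m) :
    a * x ∈ V q m := by
  have ha : a ∈ Sl q m := by
    have h1 : Algebra.adjoin ℂ ({αg q, βg q, star (αg q), star (βg q)} : Set (SU q)) ≤ Sl q m := by
      apply Algebra.adjoin_le
      intro g hg
      have hg' : g = αg q ∨ g = βg q ∨ g = star (αg q) ∨ g = star (βg q) := by
        simpa [Set.mem_insert_iff] using hg
      intro x hx
      exact gen_mulV q hq0 hg' hx
    exact h1 (by rw [adjoin_eq_top]; trivial)
  exact ha x hx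

lemma mulV_right (hq0 : 0 < q) (a : SU q) {m : ℕ} {x : SU q} (hx : x ∈ V q m) :
    x * a ∈ V q m := by
  have h1 := starV q (mulV_left q hq0 (star a) (starV q hx))
  rwa [star_mul, star_star, star_star] at h1

end Alg

/-- For `0 < q < 1` and `m ≤ m'`, the subspace `V_{m'}` is a two-sided ideal
of the subalgebra `V_m` of `A(SU_q(2))`; in particular each `V_m` with
`m ≥ 1` is a two-sided *-ideal of `A(SU_q(2))`. -/
theorem V_isIdeal (q : ℝ) (hq0 : 0 < q) (hq1 : q < 1) (m m' : ℕ) (h : m ≤ m') :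
    ((V q m' : Set (SU q)) ⊆ (V q m : Set (SU q))) ∧
    (∀ x ∈ V q m', ∀ y ∈ V q m, x * y ∈ V q m' ∧ y * x ∈ V q m') ∧
    (1 ≤ m' → ∀ a : SU q, ∀ x ∈ V q m',
      a * x ∈ V q m' ∧ x * a ∈ V q m' ∧ star x ∈ V q m') := by
  refine ⟨?_, ?_, ?_⟩
  · have : V q m' ≤ V q m := by
      apply Submodule.span_mono
      rintro x ⟨j, k, l, hkl, rfl⟩
      exact ⟨j, k, l, le_trans h hkl, rfl⟩
    exact this
  · intro x hx y _
    exact ⟨mulV_right q hq0 y hx, mulV_left q hq0 y hx⟩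
  · intro _ a x hx
    exact ⟨mulV_left q hq0 a hx, mulV_right q hq0 a hx, starV q hx⟩

end QAlg
end
end

section
/- For any q > 0, there is a *-algebra isomorphism between A(S^{2n+1}_q) and A(S^{2n+1}_{q^{-1}}). -/
noncomputable section

namespace QAlg

/-- The defining relations of the Vaksman-Soibelman quantum sphere
`S^{2n+1}_q` (with `zsF i` playing the role of `(z i)*`), together with their
images under the *-operation, so that the quotient below is the universal
unital *-algebra on the generators `z 0, ..., z n` with these relations. -/
inductive srel (n : ℕ) (q : ℝ) : F (Fin (n + 1)) → F (Fin (n + 1)) → Prop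
  | comm_zz {i j : Fin (n + 1)} (h : i < j) :
      srel n q (zF j * zF i) ((q : ℂ) • (zF i * zF j))
  | comm_zsz {i j : Fin (n + 1)} (h : i ≠ j) :
      srel n q (zsF i * zF j) ((q : ℂ) • (zF j * zsF i))
  | ccr (i : Fin (n + 1)) :
      srel n q (zsF i * zF i)
        (zF i * zsF i + ((1 - q ^ 2 : ℝ) : ℂ) • ∑ j ∈ Finset.Ioi i, zF j * zsF j)
  | sphere_eq : srel n q (∑ j, zF j * zsF j) 1
  | star_rel {a b} : srel n q a b → srel n q (starF a) (starF b)

/-- The coordinate *-algebra `A(S^{2n+1}_q)` of the quantum sphere. -/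
abbrev Sphere (n : ℕ) (q : ℝ) := RingQuot (srel n q)

noncomputable instance (n : ℕ) (q : ℝ) : StarRing (Sphere n q) :=
  @RingQuot.starRing _ _ (starRingF _) (srel n q) (fun _ _ h => srel.star_rel h)

/-- The generator `z i` of the quantum sphere algebra. -/
def z (n : ℕ) (q : ℝ) (i : Fin (n + 1)) : Sphere n q :=
  RingQuot.mkAlgHom ℂ (srel n q) (zF i)

/-! ### Construction of the isomorphism -/

/-- The quotient map as an algebra homomorphism. -/
def mkS (n : ℕ) (q : ℝ) : F (Fin (n + 1)) →ₐ[ℂ] Sphere n q :=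
  RingQuot.mkAlgHom ℂ (srel n q)

lemma mkS_eq_quot (n : ℕ) (q : ℝ) (x : F (Fin (n + 1))) :
    mkS n q x = ⟨Quot.mk _ x⟩ := by
  simp only [mkS, RingQuot.mkAlgHom_def, RingQuot.mkRingHom_def]
  rfl

lemma mkS_surjective (n : ℕ) (q : ℝ) : Function.Surjective (mkS n q) :=
  RingQuot.mkAlgHom_surjective ℂ (srel n q)

lemma star_mkS (n : ℕ) (q : ℝ) (x : F (Fin (n + 1))) :
    star (mkS n q x) = mkS n q (starF x) := by
  letI : StarRing (F (Fin (n + 1))) := starRingF _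
  rw [mkS_eq_quot, mkS_eq_quot]
  rfl

lemma starF_smul {X : Type} (c : ℂ) (f : F X) :
    starF (c • f) = (starRingEnd ℂ c) • starF f := by
  classical
  induction f using MonoidAlgebra.induction with
  | zero => simp [starF_zero]
  | single_add w d f hw hd ih =>
    rw [smul_add, starF_add, starF_add, ih, smul_add]
    congr 1
    rw [MonoidAlgebra.smul_single, starF_single, smul_eq_mul, map_mul, starF_single,
      MonoidAlgebra.smul_single, smul_eq_mul]

lemma star_smulS (n : ℕ) (q : ℝ) (c : ℂ) (x : Sphere n q) :
    star (c • x) = (starRingEnd ℂ c) • star x := by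
  obtain ⟨y, rfl⟩ := mkS_surjective n q x
  rw [← map_smul, star_mkS, star_mkS, ← map_smul, starF_smul]

/-- The class of `z i`. -/
def Z (n : ℕ) (q : ℝ) (i : Fin (n + 1)) : Sphere n q := mkS n q (zF i)

/-- The class of `(z i)*`. -/
def Zs (n : ℕ) (q : ℝ) (i : Fin (n + 1)) : Sphere n q := mkS n q (zsF i)

lemma starF_zsF {X : Type} (i : X) : starF (zsF i) = zF i := by
  rw [zF, zsF, MonoidAlgebra.of_apply, MonoidAlgebra.of_apply, starF_single, map_one]
  rfl

lemma star_Z (n : ℕ) (q : ℝ) (i : Fin (n + 1)) : star (Z n q i) = Zs n q i := by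
  rw [Z, star_mkS, starF_zF]; rfl

lemma star_Zs (n : ℕ) (q : ℝ) (i : Fin (n + 1)) : star (Zs n q i) = Z n q i := by
  rw [Zs, star_mkS, starF_zsF]; rfl

lemma R1 (n : ℕ) (q : ℝ) {i j : Fin (n + 1)} (h : i < j) :
    Z n q j * Z n q i = (q : ℂ) • (Z n q i * Z n q j) := by
  have h1 := RingQuot.mkAlgHom_rel ℂ (srel.comm_zz (n := n) (q := q) h)
  rw [map_mul, map_smul, map_mul] at h1
  exact h1

lemma R2 (n : ℕ) (q : ℝ) {i j : Fin (n + 1)} (h : i ≠ j) :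
    Zs n q i * Z n q j = (q : ℂ) • (Z n q j * Zs n q i) := by
  have h1 := RingQuot.mkAlgHom_rel ℂ (srel.comm_zsz (n := n) (q := q) h)
  rw [map_mul, map_smul, map_mul] at h1
  exact h1

lemma R3 (n : ℕ) (q : ℝ) (i : Fin (n + 1)) :
    Zs n q i * Z n q i = Z n q i * Zs n q i +
      ((1 : ℂ) - (q : ℂ) ^ 2) • ∑ j ∈ Finset.Ioi i, Z n q j * Zs n q j := by
  have h1 := RingQuot.mkAlgHom_rel ℂ (srel.ccr (n := n) (q := q) i)
  simp only [map_mul, map_add, map_smul, map_sum] at h1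
  push_cast at h1
  exact h1

lemma R4 (n : ℕ) (q : ℝ) :
    ∑ j, Z n q j * Zs n q j = (1 : Sphere n q) := by
  have h1 := RingQuot.mkAlgHom_rel ℂ (srel.sphere_eq (n := n) (q := q))
  simp only [map_sum, map_mul, map_one] at h1
  exact h1

lemma R1s (n : ℕ) (q : ℝ) {i j : Fin (n + 1)} (h : i < j) :
    Zs n q i * Zs n q j = (q : ℂ) • (Zs n q j * Zs n q i) := by
  have h1 := congrArg star (R1 n q h)
  rw [star_mul, star_Z, star_Z, star_smulS, star_mul, star_Z, star_Z,
    Complex.conj_ofReal] at h1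
  exact h1

/-- The key summation identity in the quantum sphere algebra:
the weighted sum of `(z j)* z j` over a tail equals the (rescaled) sum of
`z j (z j)*` over the same tail. -/
lemma key (n : ℕ) (p : ℝ) (m : ℕ) :
    ∑ j ∈ Finset.univ.filter (fun j : Fin (n + 1) => m ≤ (j : ℕ)),
        ((p : ℂ) ^ (2 * (j : ℕ))) • (Zs n p j * Z n p j)
      = ((p : ℂ) ^ (2 * m)) •
        ∑ j ∈ Finset.univ.filter (fun j : Fin (n + 1) => m ≤ (j : ℕ)),
          Z n p j * Zs n p j := by
  classical
  suffices H : ∀ d m, n + 1 ≤ m + d →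
      ∑ j ∈ Finset.univ.filter (fun j : Fin (n + 1) => m ≤ (j : ℕ)),
          ((p : ℂ) ^ (2 * (j : ℕ))) • (Zs n p j * Z n p j)
        = ((p : ℂ) ^ (2 * m)) •
          ∑ j ∈ Finset.univ.filter (fun j : Fin (n + 1) => m ≤ (j : ℕ)),
            Z n p j * Zs n p j by
    exact H (n + 1) m (by omega)
  intro d
  induction d with
  | zero =>
    intro m hm
    have he : Finset.univ.filter (fun j : Fin (n + 1) => m ≤ (j : ℕ)) = ∅ := by
      refine Finset.filter_eq_empty_iff.mpr ?_
      intro j _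
      have := j.isLt
      omega
    simp [he]
  | succ d ih =>
    intro m hm
    by_cases hc : n + 1 ≤ m
    · have he : Finset.univ.filter (fun j : Fin (n + 1) => m ≤ (j : ℕ)) = ∅ := by
        refine Finset.filter_eq_empty_iff.mpr ?_
        intro j _
        have := j.isLt
        omega
      simp [he]
    · have hmn : m < n + 1 := by omega
      set i : Fin (n + 1) := ⟨m, hmn⟩ with hi
      have hni : i ∉ Finset.univ.filter (fun j : Fin (n + 1) => m + 1 ≤ (j : ℕ)) := by
        simp [hi]
      have hfe : Finset.univ.filter (fun j : Fin (n + 1) => m ≤ (j : ℕ)) =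
          insert i (Finset.univ.filter (fun j : Fin (n + 1) => m + 1 ≤ (j : ℕ))) := by
        ext j
        simp only [Finset.mem_filter, Finset.mem_univ, true_and, Finset.mem_insert, hi,
          Fin.ext_iff]
        omega
      have hIoi : Finset.Ioi i = Finset.univ.filter (fun j : Fin (n + 1) => m + 1 ≤ (j : ℕ)) := by
        ext j
        simp only [Finset.mem_Ioi, Finset.mem_filter, Finset.mem_univ, true_and, hi,
          Fin.lt_def]
        omega
      rw [hfe, Finset.sum_insert hni, Finset.sum_insert hni, ih (m + 1) (by omega),
        R3 n p i, hIoi]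
      have hiv : ((i : ℕ) : ℕ) = m := rfl
      rw [hiv]
      set T := ∑ j ∈ Finset.univ.filter (fun j : Fin (n + 1) => m + 1 ≤ (j : ℕ)),
        Z n p j * Zs n p j with hT
      set W := Z n p i * Zs n p i with hW
      rw [smul_add, smul_smul]
      have hco : ((p : ℂ) ^ (2 * m) * (1 - (p : ℂ) ^ 2) + (p : ℂ) ^ (2 * (m + 1)))
          = (p : ℂ) ^ (2 * m) := by ring
      rw [add_assoc, ← add_smul, hco]
      exact (smul_add _ _ _).symm

/-- The generator assignment for the comparison map. -/
def genMap (n : ℕ) (p : ℝ) : Gen (Fin (n + 1)) → Sphere n p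
  | Sum.inl i => ((p : ℂ) ^ (i : ℕ)) • Zs n p i
  | Sum.inr i => ((p : ℂ) ^ (i : ℕ)) • Z n p i

/-- The comparison map at the level of the free algebra. -/
def phiF (n : ℕ) (p : ℝ) : F (Fin (n + 1)) →ₐ[ℂ] Sphere n p :=
  MonoidAlgebra.lift ℂ (Sphere n p) (FreeMonoid (Gen (Fin (n + 1))))
    (FreeMonoid.lift (genMap n p))

lemma phiF_zF (n : ℕ) (p : ℝ) (i : Fin (n + 1)) :
    phiF n p (zF i) = ((p : ℂ) ^ (i : ℕ)) • Zs n p i := by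
  rw [phiF, zF, MonoidAlgebra.lift_of, FreeMonoid.lift_eval_of]
  rfl

lemma phiF_zsF (n : ℕ) (p : ℝ) (i : Fin (n + 1)) :
    phiF n p (zsF i) = ((p : ℂ) ^ (i : ℕ)) • Z n p i := by
  rw [phiF, zsF, MonoidAlgebra.lift_of, FreeMonoid.lift_eval_of]
  rfl

lemma genMap_swap (n : ℕ) (p : ℝ) (s : Gen (Fin (n + 1))) :
    genMap n p (Sum.swap s) = star (genMap n p s) := by
  cases s with
  | inl i =>
    simp only [Sum.swap_inl, genMap, star_smulS, star_Zs, map_pow, Complex.conj_ofReal]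
  | inr i =>
    simp only [Sum.swap_inr, genMap, star_smulS, star_Z, map_pow, Complex.conj_ofReal]

lemma list_star (n : ℕ) (p : ℝ) (l : List (Gen (Fin (n + 1)))) :
    ((l.map Sum.swap).reverse.map (genMap n p)).prod
      = star ((l.map (genMap n p)).prod) := by
  induction l with
  | nil => simp
  | cons a l ih =>
    simp only [List.map_cons, List.reverse_cons, List.map_append, List.prod_append,
      List.map_nil, List.prod_cons, List.prod_nil, mul_one, star_mul, ih, genMap_swap]

lemma lift_wordStar (n : ℕ) (p : ℝ) (w : FreeMonoid (Gen (Fin (n + 1)))) :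
    FreeMonoid.lift (genMap n p) (wordStar w) = star (FreeMonoid.lift (genMap n p) w) := by
  rw [wordStar, FreeMonoid.lift_apply, FreeMonoid.lift_apply, FreeMonoid.toList_ofList]
  exact list_star n p (FreeMonoid.toList w)

lemma phiF_starF (n : ℕ) (p : ℝ) (f : F (Fin (n + 1))) :
    phiF n p (starF f) = star (phiF n p f) := by
  classical
  induction f using MonoidAlgebra.induction with
  | zero => simp [starF_zero]
  | single_add w c f hw hc ih =>
    rw [starF_add, map_add, map_add, star_add, ih, starF_single]
    congr 1
    rw [phiF, MonoidAlgebra.lift_single, MonoidAlgebra.lift_single, lift_wordStar,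
      star_smulS]

lemma phiF_rel (n : ℕ) (q p : ℝ) (hpq : (q : ℂ) * (p : ℂ) = 1) :
    ∀ ⦃a b⦄, srel n q a b → phiF n p a = phiF n p b := by
  intro a b h
  induction h with
  | @comm_zz i j h =>
    simp only [map_mul, map_smul, phiF_zF, smul_mul_assoc, mul_smul_comm, smul_smul]
    rw [R1s n p h, smul_smul]
    match_scalars
    linear_combination (-((p : ℂ) ^ (i : ℕ) * (p : ℂ) ^ (j : ℕ))) * hpq
  | @comm_zsz i j h =>
    simp only [map_mul, map_smul, phiF_zF, phiF_zsF, smul_mul_assoc, mul_smul_comm,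
      smul_smul]
    rw [R2 n p (Ne.symm h), smul_smul]
    match_scalars
    linear_combination (-((p : ℂ) ^ (i : ℕ) * (p : ℂ) ^ (j : ℕ))) * hpq
  | ccr i =>
    simp only [map_mul, map_add, map_smul, map_sum, phiF_zF, phiF_zsF, smul_mul_assoc,
      mul_smul_comm, smul_smul, ← pow_add, ← two_mul]
    have hIoi : Finset.Ioi i =
        Finset.univ.filter (fun j : Fin (n + 1) => (i : ℕ) + 1 ≤ (j : ℕ)) := by
      ext j
      simp only [Finset.mem_Ioi, Finset.mem_filter, Finset.mem_univ, true_and, Fin.lt_def]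
      omega
    rw [hIoi, key n p ((i : ℕ) + 1), R3 n p i, hIoi]
    set T := ∑ j ∈ Finset.univ.filter (fun j : Fin (n + 1) => (i : ℕ) + 1 ≤ (j : ℕ)),
      Z n p j * Zs n p j with hT
    match_scalars
    · ring
    · linear_combination (((q : ℂ) * (p : ℂ) + 1) * (p : ℂ) ^ (2 * (i : ℕ))) * hpq
  | sphere_eq =>
    simp only [map_sum, map_mul, map_one, phiF_zF, phiF_zsF, smul_mul_assoc,
      mul_smul_comm, smul_smul, ← pow_add, ← two_mul]
    have huniv : (Finset.univ : Finset (Fin (n + 1))) =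
        Finset.univ.filter (fun j : Fin (n + 1) => 0 ≤ (j : ℕ)) := by simp
    rw [huniv, key n p 0, ← huniv, R4 n p]
    simp
  | star_rel h ih =>
    rw [phiF_starF, phiF_starF, ih]

/-- The comparison algebra homomorphism between spheres with inverse parameters. -/
def toInv (n : ℕ) (q p : ℝ) (hpq : (q : ℂ) * (p : ℂ) = 1) :
    Sphere n q →ₐ[ℂ] Sphere n p :=
  RingQuot.liftAlgHom ℂ ⟨phiF n p, fun _ _ h => phiF_rel n q p hpq h⟩

lemma toInv_mkS (n : ℕ) (q p : ℝ) (hpq : (q : ℂ) * (p : ℂ) = 1) (x : F (Fin (n + 1))) :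
    toInv n q p hpq (mkS n q x) = phiF n p x :=
  RingQuot.liftAlgHom_mkAlgHom_apply ℂ (phiF n p) (fun _ _ h => phiF_rel n q p hpq h) x

lemma toInv_star (n : ℕ) (q p : ℝ) (hpq : (q : ℂ) * (p : ℂ) = 1) (x : Sphere n q) :
    toInv n q p hpq (star x) = star (toInv n q p hpq x) := by
  obtain ⟨y, rfl⟩ := mkS_surjective n q x
  rw [star_mkS, toInv_mkS, toInv_mkS, phiF_starF]

lemma toInv_comp (n : ℕ) (q p : ℝ) (hpq : (q : ℂ) * (p : ℂ) = 1)
    (hqp : (p : ℂ) * (q : ℂ) = 1) :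
    (toInv n p q hqp).comp (toInv n q p hpq) = AlgHom.id ℂ (Sphere n q) := by
  apply RingQuot.ringQuot_ext'
  refine MonoidAlgebra.algHom_ext' ?_ (Subsingleton.elim _ _)
  refine FreeMonoid.hom_eq fun s => ?_
  cases s with
  | inl i =>
    show toInv n p q hqp (toInv n q p hpq (mkS n q (zF i))) = mkS n q (zF i)
    rw [toInv_mkS, phiF_zF, map_smul,
      show Zs n p i = mkS n p (zsF i) from rfl, toInv_mkS, phiF_zsF, smul_smul,
      ← mul_pow, hqp, one_pow, one_smul]
    rfl
  | inr i =>
    show toInv n p q hqp (toInv n q p hpq (mkS n q (zsF i))) = mkS n q (zsF i)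
    rw [toInv_mkS, phiF_zsF, map_smul,
      show Z n p i = mkS n p (zF i) from rfl, toInv_mkS, phiF_zF, smul_smul,
      ← mul_pow, hqp, one_pow, one_smul]
    rfl

/-- For any `q > 0`, the *-algebras `A(S^{2n+1}_q)` and `A(S^{2n+1}_{q⁻¹})`
are isomorphic. -/
theorem sphere_iso_inv (n : ℕ) (q : ℝ) (hq : 0 < q) :
    Nonempty (Sphere n q ≃⋆ₐ[ℂ] Sphere n q⁻¹) := by
  have hq' : (q : ℂ) ≠ 0 := by exact_mod_cast hq.ne'
  have hpq : (q : ℂ) * ((q⁻¹ : ℝ) : ℂ) = 1 := by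
    push_cast
    field_simp
  have hqp : ((q⁻¹ : ℝ) : ℂ) * (q : ℂ) = 1 := by rw [mul_comm]; exact hpq
  refine ⟨{
    toFun := toInv n q q⁻¹ hpq
    invFun := toInv n q⁻¹ q hqp
    left_inv := fun x => by
      have := AlgHom.congr_fun (toInv_comp n q q⁻¹ hpq hqp) x
      simpa using this
    right_inv := fun x => by
      have := AlgHom.congr_fun (toInv_comp n q⁻¹ q hqp hpq) x
      simpa using this
    map_mul' := map_mul _
    map_add' := map_add _
    map_smul' := map_smul _
    map_star' := toInv_star n q q⁻¹ hpq }⟩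

end QAlg
end
end
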